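/- For every ε with 0 < ε² < 1/(4√3), the cubic equation P(π, y, ε) = y²/2 - (2/3)ε²y³ - 2 = 0 has three distinct real roots given in closed form by y₀ = √3 / cos((π - arccos(4√3 ε²))/3), y₁ = √3 / cos((π + arccos(4√3 ε²))/3), y₂ = -√3 / cos(arccos(4√3 ε²)/3). -/

import Mathlib

set_option maxHeartbeats 1000000


/-- For `0 < ε² < 1/(4√3)`, the cubic `y²/2 - (2/3) ε² y³ - 2 = 0` has exactly three
distinct real roots, given by the trigonometric (Viète) formulas
`y₀ = √3 / cos((π - arccos(4√3 ε²))/3)`, `y₁ = √3 / cos((π + arccos(4√3 ε²))/3)`,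
`y₂ = -√3 / cos(arccos(4√3 ε²)/3)`. -/
theorem amended_pendulum_roots (ε : ℝ) (hε : 0 < ε)
    (hε2 : ε ^ 2 < 1 / (4 * Real.sqrt 3)) :
    let a := Real.arccos (4 * Real.sqrt 3 * ε ^ 2)
    let y0 := Real.sqrt 3 / Real.cos ((Real.pi - a) / 3)
    let y1 := Real.sqrt 3 / Real.cos ((Real.pi + a) / 3)
    let y2 := -(Real.sqrt 3 / Real.cos (a / 3))
    (y0 ^ 2 / 2 - (2 / 3) * ε ^ 2 * y0 ^ 3 - 2 = 0) ∧
    (y1 ^ 2 / 2 - (2 / 3) * ε ^ 2 * y1 ^ 3 - 2 = 0) ∧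
    (y2 ^ 2 / 2 - (2 / 3) * ε ^ 2 * y2 ^ 3 - 2 = 0) ∧
    y0 ≠ y1 ∧ y0 ≠ y2 ∧ y1 ≠ y2 ∧
    (∀ y : ℝ, y ^ 2 / 2 - (2 / 3) * ε ^ 2 * y ^ 3 - 2 = 0 → y = y0 ∨ y = y1 ∨ y = y2) := by
  have h3 : (0:ℝ) < Real.sqrt 3 := Real.sqrt_pos.mpr (by norm_num)
  have hs : Real.sqrt 3 ^ 2 = 3 := Real.sq_sqrt (by norm_num)
  have hpi : (0:ℝ) < Real.pi := Real.pi_pos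
  intro a y0 y1 y2
  have ht0 : 0 < 4 * Real.sqrt 3 * ε ^ 2 := by positivity
  have ht1 : 4 * Real.sqrt 3 * ε ^ 2 < 1 := by
    rw [lt_div_iff₀ (by positivity)] at hε2
    linarith
  have ha : Real.cos a = 4 * Real.sqrt 3 * ε ^ 2 :=
    Real.cos_arccos (by linarith) ht1.le
  have ha0 : 0 < a := Real.arccos_pos.mpr ht1
  have hapi : a < Real.pi / 2 := by
    by_contra h
    push_neg at h
    have h2 : a ≤ Real.pi := Real.arccos_le_pi _
    have := Real.cos_nonpos_of_pi_div_two_le_of_le h (by linarith)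
    linarith
  -- positivity of the three cosines
  have hc0 : 0 < Real.cos ((Real.pi - a) / 3) :=
    Real.cos_pos_of_mem_Ioo ⟨by nlinarith, by nlinarith⟩
  have hc1 : 0 < Real.cos ((Real.pi + a) / 3) :=
    Real.cos_pos_of_mem_Ioo ⟨by nlinarith, by nlinarith⟩
  have hc2 : 0 < Real.cos (a / 3) :=
    Real.cos_pos_of_mem_Ioo ⟨by nlinarith, by nlinarith⟩
  -- triple-angle identities
  have e0 : 4 * Real.cos ((Real.pi - a) / 3) ^ 3 - 3 * Real.cos ((Real.pi - a) / 3)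
      = -(4 * Real.sqrt 3 * ε ^ 2) := by
    have h := Real.cos_three_mul ((Real.pi - a) / 3)
    rw [show 3 * ((Real.pi - a) / 3) = Real.pi - a by ring, Real.cos_pi_sub, ha] at h
    linarith
  have e1 : 4 * Real.cos ((Real.pi + a) / 3) ^ 3 - 3 * Real.cos ((Real.pi + a) / 3)
      = -(4 * Real.sqrt 3 * ε ^ 2) := by
    have h := Real.cos_three_mul ((Real.pi + a) / 3)
    rw [show 3 * ((Real.pi + a) / 3) = Real.pi + a by ring] at h
    rw [Real.cos_add, Real.cos_pi, Real.sin_pi, ha] at h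
    nlinarith [h]
  have e2 : 4 * Real.cos (a / 3) ^ 3 - 3 * Real.cos (a / 3)
      = 4 * Real.sqrt 3 * ε ^ 2 := by
    have h := Real.cos_three_mul (a / 3)
    rw [show 3 * (a / 3) = a by ring, ha] at h
    linarith
  -- root equations
  have root : ∀ c : ℝ, 0 < c →
      4 * c ^ 3 - 3 * c = -(4 * Real.sqrt 3 * ε ^ 2) →
      (Real.sqrt 3 / c) ^ 2 / 2 - 2 / 3 * ε ^ 2 * (Real.sqrt 3 / c) ^ 3 - 2 = 0 := by
    intro c hc hcc
    have hcne : c ≠ 0 := ne_of_gt hc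
    have h33 : Real.sqrt 3 ^ 3 = 3 * Real.sqrt 3 := by rw [pow_succ, hs]
    rw [div_pow, div_pow, hs, h33]
    field_simp
    linear_combination (-1) * hcc
  have hroot0 : y0 ^ 2 / 2 - 2 / 3 * ε ^ 2 * y0 ^ 3 - 2 = 0 := root _ hc0 e0
  have hroot1 : y1 ^ 2 / 2 - 2 / 3 * ε ^ 2 * y1 ^ 3 - 2 = 0 := root _ hc1 e1
  have hroot2 : y2 ^ 2 / 2 - 2 / 3 * ε ^ 2 * y2 ^ 3 - 2 = 0 := by
    have hcne : Real.cos (a / 3) ≠ 0 := ne_of_gt hc2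
    have h33 : Real.sqrt 3 ^ 3 = 3 * Real.sqrt 3 := by rw [pow_succ, hs]
    show (-(Real.sqrt 3 / Real.cos (a/3))) ^ 2 / 2
        - 2 / 3 * ε ^ 2 * (-(Real.sqrt 3 / Real.cos (a/3))) ^ 3 - 2 = 0
    rw [show (-(Real.sqrt 3 / Real.cos (a/3))) ^ 2
          = Real.sqrt 3 ^ 2 / Real.cos (a/3) ^ 2 by ring,
       show (-(Real.sqrt 3 / Real.cos (a/3))) ^ 3
          = -(Real.sqrt 3 ^ 3 / Real.cos (a/3) ^ 3) by ring, hs, h33]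
    field_simp
    linear_combination (-1) * e2
  -- ordering / distinctness
  have horder : Real.cos ((Real.pi + a) / 3) < Real.cos ((Real.pi - a) / 3) :=
    Real.cos_lt_cos_of_nonneg_of_le_pi (by nlinarith) (by nlinarith) (by linarith)
  have hy01 : y0 < y1 := div_lt_div_of_pos_left h3 hc1 horder
  have hy0pos : 0 < y0 := div_pos h3 hc0
  have hy1pos : 0 < y1 := div_pos h3 hc1
  have hy2neg : y2 < 0 := by
    have : 0 < Real.sqrt 3 / Real.cos (a / 3) := div_pos h3 hc2
    simpa [y2] using neg_neg_of_pos this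
  have hne01 : y0 ≠ y1 := ne_of_lt hy01
  have hne02 : y0 ≠ y2 := ne_of_gt (lt_trans hy2neg hy0pos)
  have hne12 : y1 ≠ y2 := ne_of_gt (lt_trans hy2neg hy1pos)
  clear_value a y0 y1 y2
  refine ⟨hroot0, hroot1, hroot2, hne01, hne02, hne12, ?_⟩
  -- completeness via Vieta
  intro y hy
  have hkne : (2:ℝ) / 3 * ε ^ 2 ≠ 0 := by positivity
  have h01 : (y0 - y1) * ((y0 + y1) / 2
      - 2 / 3 * ε ^ 2 * (y0 ^ 2 + y0 * y1 + y1 ^ 2)) = 0 := by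
    linear_combination hroot0 - hroot1
  have A01 := (mul_eq_zero.mp h01).resolve_left (sub_ne_zero.mpr hne01)
  have h02 : (y0 - y2) * ((y0 + y2) / 2
      - 2 / 3 * ε ^ 2 * (y0 ^ 2 + y0 * y2 + y2 ^ 2)) = 0 := by
    linear_combination hroot0 - hroot2
  have A02 := (mul_eq_zero.mp h02).resolve_left (sub_ne_zero.mpr hne02)
  have hS0 : (y1 - y2) * (1 / 2 - 2 / 3 * ε ^ 2 * (y0 + y1 + y2)) = 0 := by
    linear_combination A01 - A02
  have hS : 2 / 3 * ε ^ 2 * (y0 + y1 + y2) = 1 / 2 := by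
    have := (mul_eq_zero.mp hS0).resolve_left (sub_ne_zero.mpr hne12)
    linarith
  have he2 : y0 * y1 + y0 * y2 + y1 * y2 = 0 := by
    have hmul : 2 / 3 * ε ^ 2 * (y0 ^ 2 + y0 * y1 + y1 ^ 2)
        = 2 / 3 * ε ^ 2 * ((y0 + y1 + y2) * (y0 + y1)) := by
      linear_combination (-1) * A01 + (-(y0 + y1)) * hS
    have h := mul_left_cancel₀ hkne hmul
    linear_combination -h
  have hP : 2 / 3 * ε ^ 2 * (y0 * y1 * y2) = -2 := by
    linear_combination -y0 ^ 2 * hS + 2 / 3 * ε ^ 2 * y0 * he2 - hroot0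
  have hprod : 2 / 3 * ε ^ 2 * ((y - y0) * ((y - y1) * (y - y2))) = 0 := by
    linear_combination -hy - y ^ 2 * hS + 2 / 3 * ε ^ 2 * y * he2 - hP
  have := (mul_eq_zero.mp hprod).resolve_left hkne
  rcases mul_eq_zero.mp this with h | h
  · exact Or.inl (sub_eq_zero.mp h)
  · rcases mul_eq_zero.mp h with h | h
    · exact Or.inr (Or.inl (sub_eq_zero.mp h))
    · exact Or.inr (Or.inr (sub_eq_zero.mp h))
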